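/- Let Ω ⊆ ℝ² be open and let q : Ω → ℝ be smooth. Suppose there exist smooth functions Sˣ, Sʸ : Ω → ℝ satisfying on Ω: (E1) ∂_y Sˣ + ∂_x Sʸ = 4 q_x q_y; (E2) ∂_x Sˣ = 2 q_x²; (E3) ∂_y Sʸ = 2 q_y². Then q satisfies the degenerate homogeneous Monge–Ampère equation q_xx · q_yy = (q_xy)² at every point of Ω. -/

import Mathlib

open Real Set

/-- Partial derivative in the first variable. -/
noncomputable def px (f : ℝ × ℝ → ℝ) : ℝ × ℝ → ℝ :=
  fun p => deriv (fun t => f (t, p.2)) p.1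

/-- Partial derivative in the second variable. -/
noncomputable def py (f : ℝ × ℝ → ℝ) : ℝ × ℝ → ℝ :=
  fun p => deriv (fun t => f (p.1, t)) p.2

section helpers
variable {Ω : Set (ℝ × ℝ)} {f g u v : ℝ × ℝ → ℝ} {p : ℝ × ℝ}

lemma line1 (p : ℝ × ℝ) : HasDerivAt (fun t : ℝ => ((t, p.2) : ℝ × ℝ)) (1, 0) p.1 :=
  (hasDerivAt_id p.1).prodMk (hasDerivAt_const p.1 p.2)

lemma line2 (p : ℝ × ℝ) : HasDerivAt (fun t : ℝ => ((p.1, t) : ℝ × ℝ)) (0, 1) p.2 :=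
  (hasDerivAt_const p.2 p.1).prodMk (hasDerivAt_id p.2)

lemma diffAt {F : Type*} [NormedAddCommGroup F] [NormedSpace ℝ F] {f : ℝ × ℝ → F}
    (hΩ : IsOpen Ω) (hf : ContDiffOn ℝ (⊤ : ℕ∞) f Ω) (hp : p ∈ Ω) :
    DifferentiableAt ℝ f p :=
  (hf.contDiffAt (hΩ.mem_nhds hp)).differentiableAt (by simp)

lemma slice1 (hΩ : IsOpen Ω) (hf : ContDiffOn ℝ (⊤ : ℕ∞) f Ω) (hp : p ∈ Ω) :
    DifferentiableAt ℝ (fun t => f (t, p.2)) p.1 :=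
  ((diffAt hΩ hf hp).hasFDerivAt.comp_hasDerivAt p.1 (line1 p)).differentiableAt

lemma slice2 (hΩ : IsOpen Ω) (hf : ContDiffOn ℝ (⊤ : ℕ∞) f Ω) (hp : p ∈ Ω) :
    DifferentiableAt ℝ (fun t => f (p.1, t)) p.2 :=
  ((diffAt hΩ hf hp).hasFDerivAt.comp_hasDerivAt p.2 (line2 p)).differentiableAt

lemma px_eq_fderiv (hf : DifferentiableAt ℝ f p) : px f p = fderiv ℝ f p (1, 0) :=
  (hf.hasFDerivAt.comp_hasDerivAt p.1 (line1 p)).deriv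

lemma py_eq_fderiv (hf : DifferentiableAt ℝ f p) : py f p = fderiv ℝ f p (0, 1) :=
  (hf.hasFDerivAt.comp_hasDerivAt p.2 (line2 p)).deriv

lemma px_congr (hΩ : IsOpen Ω) (h : ∀ z ∈ Ω, f z = g z) (hp : p ∈ Ω) : px f p = px g p := by
  apply Filter.EventuallyEq.deriv_eq
  have hc : ContinuousAt (fun t : ℝ => ((t, p.2) : ℝ × ℝ)) p.1 :=
    (continuous_id.prodMk continuous_const).continuousAt
  filter_upwards [hc.preimage_mem_nhds (hΩ.mem_nhds hp)] with t ht
  exact h _ ht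

lemma py_congr (hΩ : IsOpen Ω) (h : ∀ z ∈ Ω, f z = g z) (hp : p ∈ Ω) : py f p = py g p := by
  apply Filter.EventuallyEq.deriv_eq
  have hc : ContinuousAt (fun t : ℝ => ((p.1, t) : ℝ × ℝ)) p.2 :=
    (continuous_const.prodMk continuous_id).continuousAt
  filter_upwards [hc.preimage_mem_nhds (hΩ.mem_nhds hp)] with t ht
  exact h _ ht

lemma fderiv_smooth (hΩ : IsOpen Ω) (hf : ContDiffOn ℝ (⊤ : ℕ∞) f Ω) :
    ContDiffOn ℝ (⊤ : ℕ∞) (fderiv ℝ f) Ω :=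
  ((contDiffOn_infty_iff_fderiv_of_isOpen hΩ).1 hf).2

lemma px_contDiffOn (hΩ : IsOpen Ω) (hf : ContDiffOn ℝ (⊤ : ℕ∞) f Ω) :
    ContDiffOn ℝ (⊤ : ℕ∞) (px f) Ω := by
  have h2 : ContDiffOn ℝ (⊤ : ℕ∞) (fun z => fderiv ℝ f z (1, 0)) Ω :=
    (fderiv_smooth hΩ hf).clm_apply contDiffOn_const
  exact h2.congr fun z hz => px_eq_fderiv (diffAt hΩ hf hz)

lemma py_contDiffOn (hΩ : IsOpen Ω) (hf : ContDiffOn ℝ (⊤ : ℕ∞) f Ω) :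
    ContDiffOn ℝ (⊤ : ℕ∞) (py f) Ω := by
  have h2 : ContDiffOn ℝ (⊤ : ℕ∞) (fun z => fderiv ℝ f z (0, 1)) Ω :=
    (fderiv_smooth hΩ hf).clm_apply contDiffOn_const
  exact h2.congr fun z hz => py_eq_fderiv (diffAt hΩ hf hz)

lemma px_py_comm (hΩ : IsOpen Ω) (hf : ContDiffOn ℝ (⊤ : ℕ∞) f Ω) (hp : p ∈ Ω) :
    px (py f) p = py (px f) p := by
  have hdd : DifferentiableAt ℝ (fderiv ℝ f) p := diffAt hΩ (fderiv_smooth hΩ hf) hp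
  have hd1 : DifferentiableAt ℝ (fun z => fderiv ℝ f z (1, 0)) p :=
    hdd.clm_apply (differentiableAt_const _)
  have hd2 : DifferentiableAt ℝ (fun z => fderiv ℝ f z (0, 1)) p :=
    hdd.clm_apply (differentiableAt_const _)
  have e1 : px (py f) p = fderiv ℝ (fun z => fderiv ℝ f z (0, 1)) p (1, 0) := by
    rw [px_congr hΩ (fun z hz => py_eq_fderiv (diffAt hΩ hf hz)) hp, px_eq_fderiv hd2]
  have e2 : py (px f) p = fderiv ℝ (fun z => fderiv ℝ f z (1, 0)) p (0, 1) := by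
    rw [py_congr hΩ (fun z hz => px_eq_fderiv (diffAt hΩ hf hz)) hp, py_eq_fderiv hd1]
  have sym : IsSymmSndFDerivAt ℝ f p :=
    (hf.contDiffAt (hΩ.mem_nhds hp)).isSymmSndFDerivAt (by simp; exact WithTop.coe_le_coe.2 le_top)
  rw [e1, e2, fderiv_clm_apply hdd (differentiableAt_const _),
    fderiv_clm_apply hdd (differentiableAt_const _)]
  simp [sym ((1 : ℝ), (0 : ℝ)) ((0 : ℝ), (1 : ℝ))]

lemma px_add (hΩ : IsOpen Ω) (hu : ContDiffOn ℝ (⊤ : ℕ∞) u Ω)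
    (hv : ContDiffOn ℝ (⊤ : ℕ∞) v Ω) (hp : p ∈ Ω) :
    px (fun z => u z + v z) p = px u p + px v p :=
  deriv_add (slice1 hΩ hu hp) (slice1 hΩ hv hp)

lemma py_add (hΩ : IsOpen Ω) (hu : ContDiffOn ℝ (⊤ : ℕ∞) u Ω)
    (hv : ContDiffOn ℝ (⊤ : ℕ∞) v Ω) (hp : p ∈ Ω) :
    py (fun z => u z + v z) p = py u p + py v p :=
  deriv_add (slice2 hΩ hu hp) (slice2 hΩ hv hp)

lemma px_two_sq (hΩ : IsOpen Ω) (hu : ContDiffOn ℝ (⊤ : ℕ∞) u Ω) (hp : p ∈ Ω) :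
    px (fun z => 2 * u z ^ 2) p = 4 * u p * px u p := by
  have h1 := slice1 hΩ hu hp
  have e : (fun t => 2 * u (t, p.2) ^ 2) = fun t => 2 * (u (t, p.2) * u (t, p.2)) := by
    funext t; ring
  show deriv (fun t => 2 * u (t, p.2) ^ 2) p.1 = _
  rw [e, deriv_const_mul 2 (d := fun t => u (t, p.2) * u (t, p.2)) (h1.mul h1), deriv_fun_mul h1 h1]
  show _ = 4 * u p * deriv (fun t => u (t, p.2)) p.1
  ring

lemma py_two_sq (hΩ : IsOpen Ω) (hu : ContDiffOn ℝ (⊤ : ℕ∞) u Ω) (hp : p ∈ Ω) :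
    py (fun z => 2 * u z ^ 2) p = 4 * u p * py u p := by
  have h1 := slice2 hΩ hu hp
  have e : (fun t => 2 * u (p.1, t) ^ 2) = fun t => 2 * (u (p.1, t) * u (p.1, t)) := by
    funext t; ring
  show deriv (fun t => 2 * u (p.1, t) ^ 2) p.2 = _
  rw [e, deriv_const_mul 2 (d := fun t => u (p.1, t) * u (p.1, t)) (h1.mul h1), deriv_fun_mul h1 h1]
  show _ = 4 * u p * deriv (fun t => u (p.1, t)) p.2
  ring

lemma px_four_mul (hΩ : IsOpen Ω) (hu : ContDiffOn ℝ (⊤ : ℕ∞) u Ω)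
    (hv : ContDiffOn ℝ (⊤ : ℕ∞) v Ω) (hp : p ∈ Ω) :
    px (fun z => 4 * u z * v z) p = 4 * (px u p * v p + u p * px v p) := by
  have h1 := slice1 hΩ hu hp
  have h2 := slice1 hΩ hv hp
  have e : (fun t => 4 * u (t, p.2) * v (t, p.2)) = fun t => 4 * (u (t, p.2) * v (t, p.2)) := by
    funext t; ring
  show deriv (fun t => 4 * u (t, p.2) * v (t, p.2)) p.1 = _
  rw [e, deriv_const_mul 4 (d := fun t => u (t, p.2) * v (t, p.2)) (h1.mul h2), deriv_fun_mul h1 h2]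
  show _ = 4 * (deriv (fun t => u (t, p.2)) p.1 * v p + u p * deriv (fun t => v (t, p.2)) p.1)
  ring

lemma py_four_mul (hΩ : IsOpen Ω) (hu : ContDiffOn ℝ (⊤ : ℕ∞) u Ω)
    (hv : ContDiffOn ℝ (⊤ : ℕ∞) v Ω) (hp : p ∈ Ω) :
    py (fun z => 4 * u z * v z) p = 4 * (py u p * v p + u p * py v p) := by
  have h1 := slice2 hΩ hu hp
  have h2 := slice2 hΩ hv hp
  have e : (fun t => 4 * u (p.1, t) * v (p.1, t)) = fun t => 4 * (u (p.1, t) * v (p.1, t)) := by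
    funext t; ring
  show deriv (fun t => 4 * u (p.1, t) * v (p.1, t)) p.2 = _
  rw [e, deriv_const_mul 4 (d := fun t => u (p.1, t) * v (p.1, t)) (h1.mul h2), deriv_fun_mul h1 h2]
  show _ = 4 * (deriv (fun t => u (p.1, t)) p.2 * v p + u p * deriv (fun t => v (p.1, t)) p.2)
  ring
end helpers

/-- if smooth resolvents `Sx, Sy` satisfy (E1)–(E3) on an open set `Ω`,
then `q` satisfies the degenerate homogeneous Monge–Ampère equation on `Ω`. -/
theorem monge_ampere_of_resolvents
    (Ω : Set (ℝ × ℝ)) (hΩ : IsOpen Ω)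
    (q Sx Sy : ℝ × ℝ → ℝ)
    (hq : ContDiffOn ℝ (⊤ : ℕ∞) q Ω)
    (hSx : ContDiffOn ℝ (⊤ : ℕ∞) Sx Ω)
    (hSy : ContDiffOn ℝ (⊤ : ℕ∞) Sy Ω)
    (hE1 : ∀ p ∈ Ω, py Sx p + px Sy p = 4 * px q p * py q p)
    (hE2 : ∀ p ∈ Ω, px Sx p = 2 * (px q p) ^ 2)
    (hE3 : ∀ p ∈ Ω, py Sy p = 2 * (py q p) ^ 2) :
    ∀ p ∈ Ω, px (px q) p * py (py q) p = (py (px q) p) ^ 2 := by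
  intro p hp
  have hA : ContDiffOn ℝ (⊤ : ℕ∞) (px q) Ω := px_contDiffOn hΩ hq
  have hB : ContDiffOn ℝ (⊤ : ℕ∞) (py q) Ω := py_contDiffOn hΩ hq
  have hpyA : ContDiffOn ℝ (⊤ : ℕ∞) (py (px q)) Ω := py_contDiffOn hΩ hA
  have hpyB : ContDiffOn ℝ (⊤ : ℕ∞) (py (py q)) Ω := py_contDiffOn hΩ hB
  have hBA : ∀ z ∈ Ω, px (py q) z = py (px q) z := fun z hz => px_py_comm hΩ hq hz
  -- second derivatives of the resolvents
  have h2 : ∀ z ∈ Ω, py (px Sx) z = 4 * px q z * py (px q) z := by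
    intro z hz
    rw [py_congr hΩ hE2 hz]
    exact py_two_sq hΩ hA hz
  have hXY' : ∀ z ∈ Ω, px (py Sx) z = 4 * px q z * py (px q) z := fun z hz =>
    (px_py_comm hΩ hSx hz).trans (h2 z hz)
  have h3 : ∀ z ∈ Ω, px (py Sy) z = 4 * py q z * px (py q) z := by
    intro z hz
    rw [px_congr hΩ hE3 hz]
    exact px_two_sq hΩ hB hz
  have hYpxSy : ∀ z ∈ Ω, py (px Sy) z = 4 * py q z * px (py q) z := fun z hz =>
    (px_py_comm hΩ hSy hz).symm.trans (h3 z hz)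
  have h1y : ∀ z ∈ Ω, py (py Sx) z + py (px Sy) z
      = 4 * (py (px q) z * py q z + px q z * py (py q) z) := by
    intro z hz
    calc py (py Sx) z + py (px Sy) z
        = py (fun w => py Sx w + px Sy w) z :=
          (py_add hΩ (py_contDiffOn hΩ hSx) (px_contDiffOn hΩ hSy) hz).symm
      _ = py (fun w => 4 * px q w * py q w) z := py_congr hΩ hE1 hz
      _ = 4 * (py (px q) z * py q z + px q z * py (py q) z) := py_four_mul hΩ hA hB hz
  have hYY : ∀ z ∈ Ω, py (py Sx) z = 4 * px q z * py (py q) z := by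
    intro z hz
    have e1 := h1y z hz
    have e5 : py (px Sy) z = 4 * py q z * py (px q) z :=
      (hYpxSy z hz).trans (by rw [hBA z hz])
    linear_combination e1 - e5
  -- commute third derivatives of Sx
  have key : px (py (py Sx)) p = py (px (py Sx)) p :=
    px_py_comm hΩ (py_contDiffOn hΩ hSx) hp
  have L : px (py (py Sx)) p
      = 4 * (px (px q) p * py (py q) p + px q p * px (py (py q)) p) := by
    rw [px_congr hΩ hYY hp]
    exact px_four_mul hΩ hA hpyB hp
  have R : py (px (py Sx)) p
      = 4 * (py (px q) p * py (px q) p + px q p * py (py (px q)) p) := by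
    rw [py_congr hΩ hXY' hp]
    exact py_four_mul hΩ hA hpyA hp
  have comm1 : px (py (py q)) p = py (px (py q)) p := px_py_comm hΩ hB hp
  have comm2 : py (px (py q)) p = py (py (px q)) p := py_congr hΩ hBA hp
  have eq := L.symm.trans (key.trans R)
  rw [comm1, comm2] at eq
  linear_combination eq / 4
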